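/- An operator on ℂ^d ⊗ ℂ^{d_E} ⊗ ℂ^d of the form Γ = Φ ⊗ K' + ((I-Φ)/(d²-1)) ⊗ L' (with Φ the maximally entangled projector on the first and third factors, and K', L' operators on ℂ^{d_E}) is positive semi-definite with partial trace over the third factor equal to the identity if and only if K' ≥ 0, L' ≥ 0, and K' + L' = d·I. -/

import Mathlib

open Matrix
open scoped ComplexOrder

noncomputable section

/-- The projector onto the maximally entangled state,
`Φ = (1/d) ∑_{i,j} |ii⟩⟨jj|`. -/
def PhiME (d : ℕ) : Matrix (Fin d × Fin d) (Fin d × Fin d) ℂ :=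
  Matrix.of fun p q => if p.1 = p.2 ∧ q.1 = q.2 then (d : ℂ)⁻¹ else 0

/-- The operator `Γ = Φ ⊗ K' + ((I-Φ)/(d²-1)) ⊗ L'` on `ℂ^d ⊗ ℂ^{d_E} ⊗ ℂ^d`,
with `Φ` on the first and third factors and `K', L'` on the middle factor. -/
def GammaKL (d dE : ℕ) (K L : Matrix (Fin dE) (Fin dE) ℂ) :
    Matrix (Fin d × Fin dE × Fin d) (Fin d × Fin dE × Fin d) ℂ :=
  Matrix.of fun p q =>
    PhiME d (p.1, p.2.2) (q.1, q.2.2) * K p.2.1 q.2.1 +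
      ((1 - PhiME d : Matrix (Fin d × Fin d) (Fin d × Fin d) ℂ) (p.1, p.2.2) (q.1, q.2.2)
          / ((d : ℂ) ^ 2 - 1)) * L p.2.1 q.2.1

open scoped Kronecker

section Aux

lemma phi_herm (d : ℕ) : (PhiME d).IsHermitian := by
  ext p q
  simp only [PhiME, conjTranspose_apply, of_apply]
  split <;> rename_i h <;> rw [and_comm] at h <;> simp [h]

lemma phi_idem {d : ℕ} (hd : d ≠ 0) : PhiME d * PhiME d = PhiME d := by
  ext ⟨i,i'⟩ ⟨j,j'⟩
  simp only [mul_apply, PhiME, of_apply, Fintype.sum_prod_type]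
  by_cases h1 : i = i' <;> by_cases h2 : j = j' <;>
    simp [h1, h2, Finset.sum_ite_eq, mul_comm, Finset.mul_sum]
  field_simp

lemma phi_psd {d : ℕ} (hd : d ≠ 0) : (PhiME d).PosSemidef := by
  have h : PhiME d = (PhiME d)ᴴ * PhiME d := by
    rw [(phi_herm d), phi_idem hd]
  rw [h]; exact posSemidef_conjTranspose_mul_self _

lemma one_sub_phi_psd {d : ℕ} (hd : d ≠ 0) : (1 - PhiME d).PosSemidef := by
  have hherm : (1 - PhiME d)ᴴ = 1 - PhiME d := by
    rw [conjTranspose_sub, conjTranspose_one, phi_herm d]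
  have hi : (1 - PhiME d) * (1 - PhiME d) = 1 - PhiME d := by
    rw [mul_sub, sub_mul, sub_mul, one_mul, mul_one, phi_idem hd, one_mul]; abel
  have h : 1 - PhiME d = (1 - PhiME d)ᴴ * (1 - PhiME d) := by rw [hherm, hi]
  rw [h]; exact posSemidef_conjTranspose_mul_self _

set_option linter.unusedSectionVars false

variable {m n : Type*} [Fintype m] [Fintype n] [DecidableEq m] [DecidableEq n]

lemma conjT_kron (A : Matrix m m ℂ) (B : Matrix n n ℂ) : (A ⊗ₖ B)ᴴ = Aᴴ ⊗ₖ Bᴴ := by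
  ext ⟨i,j⟩ ⟨k,l⟩; simp [conjTranspose_apply, mul_comm]

lemma psd_kron {A : Matrix m m ℂ} {B : Matrix n n ℂ} (hA : A.PosSemidef) (hB : B.PosSemidef) :
    (A ⊗ₖ B).PosSemidef := by
  obtain ⟨N, rfl⟩ : ∃ N : Matrix m m ℂ, A = Nᴴ * N := by
    open scoped MatrixOrder in exact CStarAlgebra.nonneg_iff_eq_star_mul_self.mp hA.nonneg
  obtain ⟨M, rfl⟩ : ∃ M : Matrix n n ℂ, B = Mᴴ * M := by
    open scoped MatrixOrder in exact CStarAlgebra.nonneg_iff_eq_star_mul_self.mp hB.nonneg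
  rw [mul_kronecker_mul, ← conjT_kron]
  exact posSemidef_conjTranspose_mul_self _

lemma psd_smul {c : ℝ} (hc : 0 ≤ c) {A : Matrix n n ℂ} (hA : A.PosSemidef) :
    ((c : ℂ) • A).PosSemidef := by
  obtain ⟨B, rfl⟩ : ∃ B : Matrix n n ℂ, A = Bᴴ * B := by
    open scoped MatrixOrder in exact CStarAlgebra.nonneg_iff_eq_star_mul_self.mp hA.nonneg
  have h : (c:ℂ) • (Bᴴ * B) = ((Real.sqrt c : ℂ) • B)ᴴ * ((Real.sqrt c : ℂ) • B) := by
    rw [conjTranspose_smul, smul_mul_assoc, mul_smul_comm, smul_smul]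
    congr 1
    simp only [star_trivial, Complex.star_def, Complex.conj_ofReal]
    rw [← Complex.ofReal_mul, Real.mul_self_sqrt hc]
  rw [h]; exact posSemidef_conjTranspose_mul_self _

lemma gamma_eq (d dE : ℕ) (K L : Matrix (Fin dE) (Fin dE) ℂ) :
    GammaKL d dE K L =
      (PhiME d ⊗ₖ K + (1 - PhiME d) ⊗ₖ ((((d:ℂ)^2 - 1)⁻¹) • L)).submatrix
        (fun p : Fin d × Fin dE × Fin d => ((p.1, p.2.2), p.2.1))
        (fun p : Fin d × Fin dE × Fin d => ((p.1, p.2.2), p.2.1)) := by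
  ext ⟨a,mm,b⟩ ⟨c,nn,b'⟩
  simp [GammaKL, submatrix_apply, Matrix.add_apply, kroneckerMap_apply, Matrix.smul_apply, div_eq_mul_inv]
  ring

/-- compressing `Γ` by the (unnormalised) maximally entangled isometry gives `d • K`. -/
lemma gamma_compress (d dE : ℕ) (hd : 2 ≤ d) (K L : Matrix (Fin dE) (Fin dE) ℂ) :
    (Matrix.of fun (p : Fin d × Fin dE × Fin d) (mm : Fin dE) =>
        if p.1 = p.2.2 ∧ p.2.1 = mm then (1:ℂ) else 0)ᴴ * GammaKL d dE K L *
      (Matrix.of fun (p : Fin d × Fin dE × Fin d) (mm : Fin dE) =>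
        if p.1 = p.2.2 ∧ p.2.1 = mm then (1:ℂ) else 0) = (d:ℂ) • K := by
  have hd0 : (d:ℂ) ≠ 0 := by positivity
  have hc : ((d:ℂ)^2 - 1) ≠ 0 := by
    have h2 : ((d:ℂ)^2) = ((d^2 : ℕ) : ℂ) := by push_cast; ring
    rw [h2, sub_ne_zero]
    intro h
    have : (d^2 : ℕ) = 1 := by exact_mod_cast h
    nlinarith
  ext mm nn
  simp only [mul_apply, conjTranspose_apply, of_apply, GammaKL, PhiME, Matrix.sub_apply, one_apply,
    Fintype.sum_prod_type, apply_ite (starRingEnd ℂ), _root_.map_one, _root_.map_zero, ite_mul,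
    mul_ite, one_mul, mul_one, zero_mul, mul_zero]
  simp only [ite_and, Finset.sum_ite_eq, Finset.sum_ite_eq', Finset.mem_univ, if_true]
  simp only [apply_ite (starRingEnd ℂ), _root_.map_one, _root_.map_zero, Prod.mk.injEq,
    ite_and, mul_add, ite_mul, mul_ite, zero_mul, mul_zero, one_mul,
    Finset.sum_add_distrib, Finset.sum_ite_eq, Finset.sum_ite_eq', Finset.mem_univ, if_true]
  simp only [apply_ite (star : ℂ → ℂ), star_one, star_zero, sub_div, sub_mul,
    Finset.sum_sub_distrib, ite_mul, mul_ite, zero_mul, mul_zero, one_mul,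
    Finset.sum_ite_eq, Finset.sum_ite_eq', Finset.mem_univ, if_true]
  simp only [← ite_and, and_self]
  simp [div_eq_mul_inv, ite_mul, zero_mul, Finset.sum_ite_eq, Finset.sum_ite_eq',
    Finset.sum_const, Finset.card_univ, nsmul_eq_mul, Matrix.smul_apply, smul_eq_mul]
  field_simp
  ring

end Aux

/-- `Γ = Φ ⊗ K' + ((I-Φ)/(d²-1)) ⊗ L'` is positive semi-definite with partial trace
over the third factor equal to the identity iff `K' ≥ 0`, `L' ≥ 0`, and `K' + L' = d·I`. -/
theorem gamma_choi_characterization (d dE : ℕ) (hd : 2 ≤ d)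
    (K L : Matrix (Fin dE) (Fin dE) ℂ) :
    ((GammaKL d dE K L).PosSemidef ∧
      Matrix.of (fun r s : Fin d × Fin dE =>
          ∑ b : Fin d, GammaKL d dE K L (r.1, r.2, b) (s.1, s.2, b))
        = (1 : Matrix (Fin d × Fin dE) (Fin d × Fin dE) ℂ))
      ↔ (K.PosSemidef ∧ L.PosSemidef ∧ K + L = (d : ℂ) • (1 : Matrix (Fin dE) (Fin dE) ℂ)) := by
  have hd0 : d ≠ 0 := by omega
  have hdR : (2:ℝ) ≤ (d:ℝ) := by exact_mod_cast hd
  have hd0' : (d:ℂ) ≠ 0 := by positivity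
  have hcR : (0:ℝ) < (d:ℝ)^2 - 1 := by nlinarith
  have hcast : (((d:ℝ)^2 - 1 : ℝ) : ℂ) = (d:ℂ)^2 - 1 := by push_cast; ring
  have hc0 : ((d:ℂ)^2 - 1) ≠ 0 := by
    rw [← hcast]
    exact_mod_cast ne_of_gt (by exact_mod_cast hcR : (0:ℂ) < (((d:ℝ)^2 - 1 : ℝ) : ℂ))
  set z0 : Fin d := ⟨0, by omega⟩
  set z1 : Fin d := ⟨1, by omega⟩
  have hz : z0 ≠ z1 := by simp [z0, z1, Fin.ext_iff]
  -- the partial trace entry formula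
  have htr_entry : ∀ (a c : Fin d) (mm nn : Fin dE),
      ∑ b : Fin d, GammaKL d dE K L (a, mm, b) (c, nn, b)
        = if a = c then (d:ℂ)⁻¹ * (K mm nn + L mm nn) else 0 := by
    intro a c mm nn
    simp only [GammaKL, PhiME, of_apply, Matrix.sub_apply, one_apply, Prod.mk.injEq]
    by_cases hac : a = c
    · subst hac
      simp only [and_self, and_true, eq_self_iff_true, if_true]
      simp [sub_div, sub_mul, ite_mul, zero_mul, div_eq_mul_inv, Finset.sum_add_distrib,
        Finset.sum_sub_distrib, Finset.sum_ite_eq, Finset.sum_ite_eq', Finset.sum_const,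
        Finset.card_univ, nsmul_eq_mul]
      field_simp
    · rw [if_neg hac]
      apply Finset.sum_eq_zero
      intro b _
      have h1 : ¬(a = b ∧ c = b) := fun h => hac (h.1.trans h.2.symm)
      simp [h1, hac]
  constructor
  · rintro ⟨hP, htr⟩
    -- K is PSD
    have hK : K.PosSemidef := by
      have h1 := hP.conjTranspose_mul_mul_same (Matrix.of fun (p : Fin d × Fin dE × Fin d)
        (mm : Fin dE) => if p.1 = p.2.2 ∧ p.2.1 = mm then (1:ℂ) else 0)
      rw [gamma_compress d dE hd K L] at h1
      have h2 := psd_smul (c := (d:ℝ)⁻¹) (by positivity) h1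
      rwa [smul_smul, show (((d:ℝ)⁻¹ : ℝ) : ℂ) * (d:ℂ) = 1 by
        push_cast; field_simp, one_smul] at h2
    have hL : L.PosSemidef := by
      have h1 := hP.submatrix (fun mm : Fin dE => (z0, mm, z1))
      have h2 : (GammaKL d dE K L).submatrix (fun mm : Fin dE => (z0, mm, z1))
          (fun mm : Fin dE => (z0, mm, z1)) = (((d:ℂ)^2 - 1)⁻¹) • L := by
        ext mm nn
        simp [GammaKL, PhiME, submatrix_apply, Matrix.smul_apply, hz, Prod.ext_iff,
          div_eq_mul_inv, smul_eq_mul]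
      rw [h2] at h1
      have h3 := psd_smul (c := (d:ℝ)^2 - 1) (le_of_lt hcR) h1
      rwa [smul_smul, hcast, mul_inv_cancel₀ hc0, one_smul] at h3
    refine ⟨hK, hL, ?_⟩
    ext mm nn
    have hval := congrFun (congrFun htr (z0, mm)) (z0, nn)
    simp only [of_apply, htr_entry, if_pos rfl, one_apply, Prod.mk.injEq, true_and, if_true] at hval
    rw [Matrix.add_apply, Matrix.smul_apply, one_apply, smul_eq_mul]
    by_cases hmn : mm = nn
    · subst hmn
      rw [if_pos rfl, mul_one]
      rw [if_pos rfl] at hval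
      field_simp at hval
      linear_combination hval
    · rw [if_neg hmn, mul_zero]
      rw [if_neg hmn] at hval
      field_simp at hval
      linear_combination hval
  · rintro ⟨hK, hL, hsum⟩
    constructor
    · rw [gamma_eq d dE K L]
      refine PosSemidef.submatrix ?_ _
      refine (psd_kron (phi_psd hd0) hK).add (psd_kron (one_sub_phi_psd hd0) ?_)
      have := psd_smul (c := ((d:ℝ)^2 - 1)⁻¹) (by positivity) hL
      rwa [show ((((d:ℝ)^2 - 1)⁻¹ : ℝ) : ℂ) = ((d:ℂ)^2 - 1)⁻¹ by push_cast; ring] at this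
    · ext ⟨a, mm⟩ ⟨c, nn⟩
      have hKL : K mm nn + L mm nn = if mm = nn then (d:ℂ) else 0 := by
        have h := congrFun (congrFun hsum mm) nn
        rw [Matrix.add_apply, Matrix.smul_apply, one_apply, smul_eq_mul] at h
        rw [h]
        split <;> simp
      simp only [of_apply, htr_entry a c mm nn, one_apply, Prod.mk.injEq, hKL]
      by_cases hac : a = c <;> by_cases hmn : mm = nn <;>
        simp [hac, hmn, inv_mul_cancel₀ hd0']

end
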